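/- Let f : ℝ^n → ℝ^n be C¹ with det(I + (h/2)f'(x)) = det(I - (h/2)f'(x)) for all x, and let φ_h be the trapezoidal map satisfying φ_h(x) = x + (h/2)(f(x) + f(φ_h(x))) with φ_h differentiable and det(I - (h/2)f'(φ_h(x))) ≠ 0. Then det(φ_h'(x)) · μ(φ_h(x)) = μ(x), where μ(x) = det(I - (h/2)f'(x)). -/

import Mathlib

open Matrix

/-- The Jacobian matrix of a map `f : ℝ^n → ℝ^n` at a point `x`. -/
noncomputable def jacobian {ι : Type*} [Fintype ι] [DecidableEq ι]
    (f : (ι → ℝ) → (ι → ℝ)) (x : ι → ℝ) : Matrix ι ι ℝ :=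
  Matrix.of fun i j => fderiv ℝ f x (Pi.single j 1) i

lemma jacobian_eq_toMatrix' {ι : Type*} [Fintype ι] [DecidableEq ι]
    (f : (ι → ℝ) → (ι → ℝ)) (x : ι → ℝ) :
    jacobian f x = LinearMap.toMatrix' ((fderiv ℝ f x : (ι → ℝ) →ₗ[ℝ] (ι → ℝ))) := by
  ext i j
  have hs : (fun j' => if j' = j then (1 : ℝ) else 0) = Pi.single j 1 := by
    funext j'
    simp [Pi.single_apply]
  simp [jacobian, LinearMap.toMatrix'_apply, hs]

theorem stmt_16 {n : ℕ} (f : (Fin n → ℝ) → (Fin n → ℝ)) (hf : ContDiff ℝ 1 f)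
    (h : ℝ)
    (hdet : ∀ x : Fin n → ℝ,
      ((1 : Matrix (Fin n) (Fin n) ℝ) + (h / 2) • jacobian f x).det
        = ((1 : Matrix (Fin n) (Fin n) ℝ) - (h / 2) • jacobian f x).det)
    (φ : (Fin n → ℝ) → (Fin n → ℝ)) (hφ : Differentiable ℝ φ)
    (htrap : ∀ x, φ x = x + (h / 2) • (f x + f (φ x)))
    (hinv : ∀ x,
      ((1 : Matrix (Fin n) (Fin n) ℝ) - (h / 2) • jacobian f (φ x)).det ≠ 0) :
    ∀ x, (jacobian φ x).det *
        ((1 : Matrix (Fin n) (Fin n) ℝ) - (h / 2) • jacobian f (φ x)).det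
      = ((1 : Matrix (Fin n) (Fin n) ℝ) - (h / 2) • jacobian f x).det := by
  intro x
  have hfd : Differentiable ℝ f := hf.differentiable one_ne_zero
  -- derivative identity
  have h2 : HasFDerivAt (fun y => y + (h / 2) • (f y + f (φ y)))
      (ContinuousLinearMap.id ℝ (Fin n → ℝ) +
        (h / 2) • ((fderiv ℝ f x) + (fderiv ℝ f (φ x)).comp (fderiv ℝ φ x))) x := by
    exact (hasFDerivAt_id x).add
      (((hfd x).hasFDerivAt.add
        ((hfd (φ x)).hasFDerivAt.comp x (hφ x).hasFDerivAt)).const_smul (h / 2))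
  have h2' : HasFDerivAt φ
      (ContinuousLinearMap.id ℝ (Fin n → ℝ) +
        (h / 2) • ((fderiv ℝ f x) + (fderiv ℝ f (φ x)).comp (fderiv ℝ φ x))) x :=
    h2.congr_of_eventuallyEq (Filter.Eventually.of_forall htrap)
  have hD : fderiv ℝ φ x =
      ContinuousLinearMap.id ℝ (Fin n → ℝ) +
        (h / 2) • ((fderiv ℝ f x) + (fderiv ℝ f (φ x)).comp (fderiv ℝ φ x)) :=
    h2'.fderiv
  -- matrix version
  set A := jacobian f x
  set B := jacobian f (φ x)
  set J := jacobian φ x with hJ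
  have hM : J = 1 + ((h / 2) • A + (h / 2) • (B * J)) := by
    conv_lhs =>
      rw [hJ, jacobian_eq_toMatrix' φ x, hD]
      simp only [ContinuousLinearMap.coe_add, ContinuousLinearMap.coe_smul,
        ContinuousLinearMap.coe_comp, ContinuousLinearMap.coe_id,
        map_add, _root_.map_smul, LinearMap.toMatrix'_comp, LinearMap.toMatrix'_id]
      rw [show (((fderiv ℝ f (φ x)).comp (fderiv ℝ φ x) : (Fin n → ℝ) →L[ℝ] (Fin n → ℝ)) :
          (Fin n → ℝ) →ₗ[ℝ] (Fin n → ℝ)) = ((fderiv ℝ f (φ x) : (Fin n → ℝ) →ₗ[ℝ] (Fin n → ℝ)).comp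
          (fderiv ℝ φ x : (Fin n → ℝ) →ₗ[ℝ] (Fin n → ℝ))) from rfl, LinearMap.toMatrix'_comp]
      rw [← jacobian_eq_toMatrix' f x, ← jacobian_eq_toMatrix' f (φ x),
        ← jacobian_eq_toMatrix' φ x]
    rw [smul_add]
  have key : (1 - (h / 2) • B) * J = 1 + (h / 2) • A := by
    rw [sub_mul, one_mul, smul_mul_assoc]
    nth_rewrite 1 [hM]
    abel
  have := congrArg Matrix.det key
  rw [Matrix.det_mul, hdet x] at this
  rw [mul_comm] at this
  exact this
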